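/- Let (C, 𝓗, 𝓚) be a cycle system where each member of 𝓗 induces a single run on C, 𝓗 is strict-containment free, and (C, 𝓗, 𝓚) is axax-free (both (C,𝓗) and (C,𝓚) are axax-free). Then there exists an outerplanar graph Q on vertex set 𝓗 whose outer cycle is C(𝓗) (the cycle in lex cyclic order) such that for every K ∈ 𝓚, the set {H ∈ 𝓗 : H ∩ K ≠ ∅} induces a connected subgraph of Q. -/

import Mathlib

open scoped ENNReal

/-- A tree decomposition of a graph `G`: a tree `T` with bags `bag i ⊆ V` such that
every vertex appears in a bag, every edge lies in a bag, and the bags containing a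
fixed vertex form a connected subtree. -/
def IsTreeDecomp {V ι : Type} (G : SimpleGraph V) (T : SimpleGraph ι) (bag : ι → Set V) : Prop :=
  T.IsTree ∧ (∀ v, ∃ i, v ∈ bag i) ∧
    (∀ u v, G.Adj u v → ∃ i, u ∈ bag i ∧ v ∈ bag i) ∧
    (∀ v, (T.induce {i | v ∈ bag i}).Connected)

/-- Width of a tree decomposition: (max bag size) − 1. -/
noncomputable def decompWidth {V ι : Type} (bag : ι → Set V) : ℕ∞ :=
  (⨆ i, (bag i).encard) - 1

/-- Treewidth: the infimum of widths of tree decompositions. -/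
noncomputable def treewidth {V : Type} (G : SimpleGraph V) : ℕ∞ :=
  sInf {w : ℕ∞ | ∃ (ι : Type) (T : SimpleGraph ι) (bag : ι → Set V),
    IsTreeDecomp G T bag ∧ w = decompWidth bag}

/-- A family of vertex sets is non-piercing in `G` if every pairwise difference
(when nonempty) induces a connected subgraph of `G`. -/
def NonPiercing {V : Type} (G : SimpleGraph V) (F : Set (Set V)) : Prop :=
  ∀ H ∈ F, ∀ H' ∈ F, (H \ H').Nonempty → (G.induce (H \ H')).Connected

/-- Outerplanarity via a one-page (circular, non-crossing) layout. -/
def Outerplanar {α : Type} (Q : SimpleGraph α) : Prop :=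
  ∃ f : α → ℕ, Function.Injective f ∧
    ∀ a b c d : α, Q.Adj a b → Q.Adj c d →
      ¬ (f a < f c ∧ f c < f b ∧ f b < f d)

/-- `a, b, c` appear in this (clockwise) cyclic order on the cycle `Fin n`. -/
def Cyc3 {n : ℕ} (a b c : Fin n) : Prop :=
  (a < b ∧ b < c) ∨ (b < c ∧ c < a) ∨ (c < a ∧ a < b)

/-- `a, b, c, d` appear in this (clockwise) cyclic order on the cycle `Fin n`. -/
def Cyc4 {n : ℕ} (a b c d : Fin n) : Prop :=
  (a < b ∧ b < c ∧ c < d) ∨ (b < c ∧ c < d ∧ d < a) ∨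
    (c < d ∧ d < a ∧ a < b) ∨ (d < a ∧ a < b ∧ b < c)

/-- Open arc of vertices strictly between `u` and `v` clockwise. -/
def arcO {n : ℕ} (u v : Fin n) : Set (Fin n) := {w | Cyc3 u w v}

/-- Closed arc of vertices from `u` to `v` clockwise (inclusive). -/
def arcC {n : ℕ} (u v : Fin n) : Set (Fin n) := {u} ∪ {v} ∪ {w | Cyc3 u w v}

/-- The cycle system is `axax`-free. -/
def AxaxFree {n : ℕ} (F : Set (Set (Fin n))) : Prop :=
  ¬ ∃ H ∈ F, ∃ H' ∈ F, ∃ a₁ x₁ a₂ x₂ : Fin n,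
    Cyc4 a₁ x₁ a₂ x₂ ∧ a₁ ∈ H \ H' ∧ a₂ ∈ H \ H' ∧ x₁ ∈ H' ∧ x₂ ∈ H'

/-- The cycle system is `abab`-free. -/
def AbabFree {n : ℕ} (F : Set (Set (Fin n))) : Prop :=
  ¬ ∃ H ∈ F, ∃ H' ∈ F, ∃ a₁ b₁ a₂ b₂ : Fin n,
    Cyc4 a₁ b₁ a₂ b₂ ∧ a₁ ∈ H \ H' ∧ a₂ ∈ H \ H' ∧ b₁ ∈ H' \ H ∧ b₂ ∈ H' \ H

/-- The vertices appearing in bags of the component of `T` minus the edge `{x,y}`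
that contains `x` (the `x`-side of the tree decomposition). -/
def sideVerts {V ι : Type} (T : SimpleGraph ι) (bag : ι → Set V) (x y : ι) : Set V :=
  ⋃ i ∈ {i | (T.deleteEdges {s(x, y)}).Reachable x i}, bag i

/-- Adjacency in the `N × N` grid graph. -/
def gridAdj {N : ℕ} (p q : Fin N × Fin N) : Prop :=
  (p.1 = q.1 ∧ (p.2.val + 1 = q.2.val ∨ q.2.val + 1 = p.2.val)) ∨
    (p.2 = q.2 ∧ (p.1.val + 1 = q.1.val ∨ q.1.val + 1 = p.1.val))

/-- Clockwise distance from `b` to `a` on the cycle `Fin n`. -/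
def relpos {n : ℕ} (a b : Fin n) : ℕ := (a.val + n - b.val) % n

/-- Lexicographic comparison on pairs of naturals. -/
def lexLe (p q : ℕ × ℕ) : Prop := p.1 < q.1 ∨ (p.1 = q.1 ∧ p.2 ≤ q.2)

/-- A set of indices forming a (possibly empty) cyclic interval of `Fin m`. -/
def CycInterval {m : ℕ} (S : Set (Fin m)) : Prop := S = ∅ ∨ ∃ i j : Fin m, S = arcC i j

/-- Maximal elements of a family of sets under inclusion. -/
def maxElems {X : Type} (F : Set (Set X)) : Set (Set X) :=
  {H ∈ F | ∀ H' ∈ F, H ⊆ H' → H = H'}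


-- ===================== auxiliary machinery =====================
section Toolbox
variable {n : ℕ} [NeZero n]

lemma npos : 0 < n := NeZero.pos n

lemma relpos_lt (a b : Fin n) : relpos a b < n := Nat.mod_lt _ npos

omit [NeZero n] in
lemma relpos_cases (a b : Fin n) :
    (b.val ≤ a.val ∧ relpos a b + b.val = a.val) ∨
    (a.val < b.val ∧ relpos a b + b.val = a.val + n) := by
  have hb := b.isLt; have ha := a.isLt
  unfold relpos
  rcases le_or_gt b.val a.val with h | h
  · left; refine ⟨h, ?_⟩
    have h2 : a.val + n - b.val = (a.val - b.val) + n := by omega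
    rw [h2, Nat.add_mod_right, Nat.mod_eq_of_lt (by omega)]; omega
  · right; refine ⟨h, ?_⟩
    rw [Nat.mod_eq_of_lt (by omega)]; omega

omit [NeZero n] in
lemma relpos_eq_zero_iff (a b : Fin n) : relpos a b = 0 ↔ a = b := by
  have h := relpos_cases a b
  constructor
  · intro h0; apply Fin.ext; omega
  · intro h0; subst h0; omega

omit [NeZero n] in
lemma relpos_chain (x y z : Fin n) :
    relpos x z = relpos x y + relpos y z ∨ relpos x z + n = relpos x y + relpos y z := by
  rcases relpos_cases x y with h1 | h1 <;> rcases relpos_cases y z with h2 | h2 <;>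
    rcases relpos_cases x z with h3 | h3 <;> omega

omit [NeZero n] in
lemma relpos_right_cancel (x y b : Fin n) (h : relpos x b = relpos y b) : x = y := by
  have h1 := relpos_cases x b; have h2 := relpos_cases y b
  have hx := x.isLt; have hy := y.isLt
  apply Fin.ext; omega

omit [NeZero n] in
lemma cyc3_iff (a b c : Fin n) :
    Cyc3 a b c ↔ 0 < relpos b a ∧ relpos b a < relpos c a := by
  have h1 := relpos_cases b a; have h2 := relpos_cases c a
  have ha := a.isLt; have hb := b.isLt; have hc := c.isLt
  unfold Cyc3
  simp only [Fin.lt_def]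
  omega

omit [NeZero n] in
lemma cyc4_iff (a b c d : Fin n) :
    Cyc4 a b c d ↔ 0 < relpos b a ∧ relpos b a < relpos c a ∧ relpos c a < relpos d a := by
  have h1 := relpos_cases b a; have h2 := relpos_cases c a; have h3 := relpos_cases d a
  have ha := a.isLt; have hb := b.isLt; have hc := c.isLt; have hd := d.isLt
  unfold Cyc4
  simp only [Fin.lt_def]
  omega


omit [NeZero n] in
lemma relpos_antisymm (x y : Fin n) (h : x ≠ y) : relpos x y + relpos y x = n := by
  have hne : x.val ≠ y.val := fun hc => h (Fin.ext hc)
  rcases relpos_cases x y with h1 | h1 <;> rcases relpos_cases y x with h2 | h2 <;> omega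

lemma shift_le_iff (x sj b : Fin n) (l : ℕ) (hl : l < n) :
    relpos x sj ≤ l ↔
      ((relpos sj b ≤ relpos x b ∧ relpos x b ≤ relpos sj b + l) ∨ relpos x b + n ≤ relpos sj b + l) := by
  have hc := relpos_chain x sj b
  have h1 := relpos_lt x sj; have h2 := relpos_lt sj b; have h3 := relpos_lt x b
  omega

lemma scfFact (sk tk sl tl : Fin n)
    (h : ¬ (0 < relpos sk sl ∧ relpos sk sl ≤ relpos tk sl ∧ relpos tk sl < relpos tl sl))
    (hpos : 0 < relpos sk sl) :
    relpos sk sl + relpos tk sk ≥ n ∨ relpos sk sl + relpos tk sk ≥ relpos tl sl := by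
  have hc := relpos_chain tk sk sl
  have h1 := relpos_lt tk sl; have h2 := relpos_lt sk sl; have h3 := relpos_lt tk sk
  omega

lemma cyc4_of_base' : True := trivial

lemma cyc4_of_base (b x1 x2 x3 x4 : Fin n)
    (h : relpos x1 b < relpos x2 b ∧ relpos x2 b < relpos x3 b ∧ relpos x3 b < relpos x4 b) :
    Cyc4 x1 x2 x3 x4 := by
  rw [cyc4_iff]
  have c2 := relpos_chain x2 x1 b
  have c3 := relpos_chain x3 x1 b
  have c4 := relpos_chain x4 x1 b
  have l2 := relpos_lt x2 x1; have l3 := relpos_lt x3 x1; have l4 := relpos_lt x4 x1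
  have l2' := relpos_lt x2 b; have l3' := relpos_lt x3 b; have l4' := relpos_lt x4 b
  have l1' := relpos_lt x1 b
  omega

lemma cyc3_base (b x z w : Fin n) (hlt : relpos x b < relpos w b) :
    Cyc3 x z w ↔ (relpos x b < relpos z b ∧ relpos z b < relpos w b) := by
  rw [cyc3_iff]
  have c1 := relpos_chain z x b
  have c2 := relpos_chain w x b
  have l1 := relpos_lt z x; have l2 := relpos_lt w x
  have l3 := relpos_lt z b; have l4 := relpos_lt w b; have l5 := relpos_lt x b
  omega

omit [NeZero n] in
lemma cyc4_parts (a c b d : Fin n) (h : Cyc4 a c b d) :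
    Cyc3 a c b ∧ Cyc3 b d a := by
  unfold Cyc4 at h
  unfold Cyc3
  simp only [Fin.lt_def] at *
  omega

omit [NeZero n] in
lemma cyc4_rot (a b c d : Fin n) (h : Cyc4 a b c d) : Cyc4 b c d a := by
  unfold Cyc4 at *; tauto

end Toolbox

section Support
variable {m : ℕ} [NeZero m]

def pairAxax (T T' : Set (Fin m)) : Prop :=
  ¬ ∃ a1 x1 a2 x2 : Fin m, Cyc4 a1 x1 a2 x2 ∧ a1 ∈ T ∧ a1 ∉ T' ∧ a2 ∈ T ∧ a2 ∉ T' ∧ x1 ∈ T' ∧ x2 ∈ T'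

def NoCross (Q : SimpleGraph (Fin m)) : Prop :=
  ∀ a b c d, Q.Adj a b → Q.Adj c d → ¬ Cyc4 a c b d

def USucc (U : Finset (Fin m)) (u v : Fin m) : Prop :=
  u ∈ U ∧ v ∈ U ∧ u ≠ v ∧ ∀ z ∈ U, ¬ Cyc3 u z v

def QU (U : Finset (Fin m)) : SimpleGraph (Fin m) := SimpleGraph.fromRel (USucc U)

def ReachIn (Q : SimpleGraph (Fin m)) (S : Set (Fin m)) (x y : Fin m) : Prop :=
  Relation.ReflTransGen (fun a b => Q.Adj a b ∧ a ∈ S ∧ b ∈ S) x y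

lemma reachIn_refl (Q : SimpleGraph (Fin m)) (S : Set (Fin m)) (x : Fin m) : ReachIn Q S x x :=
  Relation.ReflTransGen.refl

lemma reachIn_single {Q : SimpleGraph (Fin m)} {S : Set (Fin m)} {x y : Fin m}
    (h : Q.Adj x y) (hx : x ∈ S) (hy : y ∈ S) : ReachIn Q S x y :=
  Relation.ReflTransGen.single ⟨h, hx, hy⟩

lemma reachIn_trans {Q : SimpleGraph (Fin m)} {S : Set (Fin m)} {x y z : Fin m}
    (h1 : ReachIn Q S x y) (h2 : ReachIn Q S y z) : ReachIn Q S x z :=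
  Relation.ReflTransGen.trans h1 h2

lemma reachIn_symm {Q : SimpleGraph (Fin m)} {S : Set (Fin m)} {x y : Fin m}
    (h : ReachIn Q S x y) : ReachIn Q S y x := by
  induction h with
  | refl => exact reachIn_refl Q S x
  | tail _ h2 ih => exact reachIn_trans (Relation.ReflTransGen.single ⟨h2.1.symm, h2.2.2, h2.2.1⟩) ih

lemma reachIn_mono {Q Q' : SimpleGraph (Fin m)} {S S' : Set (Fin m)} {x y : Fin m}
    (hQ : Q ≤ Q') (hS : S ⊆ S') (h : ReachIn Q S x y) : ReachIn Q' S' x y := by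
  refine Relation.ReflTransGen.mono ?_ x y h
  rintro a b ⟨hadj, ha, hb⟩
  exact ⟨hQ hadj, hS ha, hS hb⟩

lemma cross_kill (U : Finset (Fin m)) (a b c d : Fin m)
    (hab : USucc U a b ∨ USucc U b a) (hc : c ∈ U) (hd : d ∈ U) (h4 : Cyc4 a c b d) : False := by
  obtain ⟨h1, h2⟩ := cyc4_parts a c b d h4
  rcases hab with h | h
  · exact h.2.2.2 c hc h1
  · exact h.2.2.2 d hd h2

lemma nocross_QU_sup (Q : SimpleGraph (Fin m)) (U : Finset (Fin m))
    (hQ : NoCross Q) (hQU : ∀ a b, Q.Adj a b → a ∈ U ∧ b ∈ U) :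
    NoCross (Q ⊔ QU U) := by
  intro a b c d hab hcd h4
  rcases hab with hab | hab <;> rcases hcd with hcd | hcd
  · exact hQ a b c d hab hcd h4
  · obtain ⟨hne, hr⟩ := hcd
    exact cross_kill U c d b a hr (hQU a b hab).2 (hQU a b hab).1 (cyc4_rot _ _ _ _ h4)
  · obtain ⟨hne, hr⟩ := hab
    exact cross_kill U a b c d hr (hQU c d hcd).1 (hQU c d hcd).2 h4
  · obtain ⟨hne, hr⟩ := hab
    exact cross_kill U a b c d hr (hcd.2.elim (fun h => h.1) (fun h => h.2.1))
      (hcd.2.elim (fun h => h.2.1) (fun h => h.1)) h4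

lemma QU_adj {U : Finset (Fin m)} {u v : Fin m} (h : USucc U u v) : (QU U).Adj u v := by
  rw [QU, SimpleGraph.fromRel_adj]
  exact ⟨h.2.2.1, Or.inl h⟩

lemma QU_le_sup (Q : SimpleGraph (Fin m)) (U : Finset (Fin m)) : QU U ≤ Q ⊔ QU U := le_sup_right

end Support

section SupportMain
variable {m : ℕ} [NeZero m]

def IsGap (T : Set (Fin m)) (u v : Fin m) : Prop :=
  u ∈ T ∧ v ∈ T ∧ u ≠ v ∧ ∀ z ∈ T, ¬ Cyc3 u z v

lemma relpos_self (x : Fin m) : relpos x x = 0 := (relpos_eq_zero_iff x x).2 rfl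

lemma nocross_QU (U : Finset (Fin m)) : NoCross (QU U) := by
  intro a b c d hab hcd h4
  rw [QU, SimpleGraph.fromRel_adj] at hab hcd
  have hc : c ∈ U := hcd.2.elim (fun h => h.1) (fun h => h.2.1)
  have hd : d ∈ U := hcd.2.elim (fun h => h.2.1) (fun h => h.1)
  exact cross_kill U a b c d hab.2 hc hd h4

lemma walk_base (Q : SimpleGraph (Fin m)) (S : Set (Fin m)) (b : Fin m)
    (hstep : ∀ x w, x ∈ S → w ∈ S → relpos x b < relpos w b →
      (∀ z ∈ S, ¬(relpos x b < relpos z b ∧ relpos z b < relpos w b)) → Q.Adj x w) :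
    ∀ d x y, x ∈ S → y ∈ S → relpos x b ≤ relpos y b → relpos y b - relpos x b ≤ d →
      ReachIn Q S x y := by
  intro d
  induction d with
  | zero =>
    intro x y hx hy hle hd
    have hxy : relpos x b = relpos y b := by omega
    obtain rfl := relpos_right_cancel x y b hxy
    exact reachIn_refl _ _ _
  | succ d ihd =>
    intro x y hx hy hle hd
    by_cases hxy : relpos x b = relpos y b
    · obtain rfl := relpos_right_cancel x y b hxy
      exact reachIn_refl _ _ _
    · have hlt : relpos x b < relpos y b := lt_of_le_of_ne hle hxy
      have hS'ne : ({z | z ∈ S ∧ relpos x b < relpos z b ∧ relpos z b ≤ relpos y b} : Set (Fin m)).Nonempty :=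
        ⟨y, hy, hlt, le_refl _⟩
      obtain ⟨w, hwS', hwmin⟩ := Set.exists_min_image _ (fun z => relpos z b) (Set.toFinite _) hS'ne
      obtain ⟨hwS, hwlt, hwle⟩ := hwS'
      have hadj : Q.Adj x w := by
        refine hstep x w hx hwS hwlt ?_
        intro z hz hbet
        have := hwmin z ⟨hz, hbet.1, le_trans hbet.2.le hwle⟩
        omega
      exact reachIn_trans (reachIn_single hadj hx hwS) (ihd w y hwS hy hwle (by omega))

end SupportMain

section SupportRec
variable {m : ℕ} [NeZero m]

lemma supportRec (c : ℕ) : ∀ (U : Finset (Fin m)) (F : Set (Set (Fin m))),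
    U.card ≤ c →
    (∀ T ∈ F, ∀ x ∈ T, x ∈ U) →
    (∀ T ∈ F, ∀ T' ∈ F, pairAxax T T') →
    ∃ Q : SimpleGraph (Fin m),
      (∀ a b, Q.Adj a b → a ∈ U ∧ b ∈ U) ∧ NoCross Q ∧
      (∀ u v, USucc U u v → Q.Adj u v) ∧
      (∀ T ∈ F, ∀ x ∈ T, ∀ y ∈ T, ReachIn Q T x y) := by
  induction c with
  | zero =>
    intro U F hcard hsub _
    refine ⟨QU U, ?_, nocross_QU U, ?_, ?_⟩
    · intro a b hab
      rw [QU, SimpleGraph.fromRel_adj] at hab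
      exact ⟨hab.2.elim (fun h => h.1) (fun h => h.2.1), hab.2.elim (fun h => h.2.1) (fun h => h.1)⟩
    · intro u v h; exact QU_adj h
    · intro T hT x hx y hy
      have hU : U = ∅ := Finset.card_eq_zero.1 (Nat.le_zero.1 hcard)
      exact absurd (hsub T hT x hx) (by simp [hU])
  | succ c ih =>
    intro U F hcard hsub hax
    classical
    by_cases hg : ∃ T ∈ F, ∃ p q, IsGap T p q ∧ ∃ z ∈ U, Cyc3 p z q
    · -- recursive case
      set M := {k : ℕ | 0 < k ∧ ∃ T ∈ F, ∃ p q, IsGap T p q ∧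
        (U.filter (fun z => Cyc3 p z q)).card = k} with hM
      have hMne : M.Nonempty := by
        obtain ⟨T, hT, p, q, hgap, z, hzU, hzc⟩ := hg
        refine ⟨(U.filter (fun z => Cyc3 p z q)).card, ?_, T, hT, p, q, hgap, rfl⟩
        exact Finset.card_pos.2 ⟨z, Finset.mem_filter.2 ⟨hzU, hzc⟩⟩
      have hk0 := Nat.sInf_mem hMne
      set k0 := sInf M with hk0def
      obtain ⟨hk0pos, T0, hT0, u, v, hgap0, hfc⟩ := hk0
      have hmin : ∀ T ∈ F, ∀ p q, IsGap T p q →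
          ∀ z ∈ U, Cyc3 p z q → k0 ≤ (U.filter (fun z => Cyc3 p z q)).card := by
        intro T hT p q hgap z hzU hzc
        refine Nat.sInf_le ⟨?_, T, hT, p, q, hgap, rfl⟩
        exact Finset.card_pos.2 ⟨z, Finset.mem_filter.2 ⟨hzU, hzc⟩⟩
      set I := U.filter (fun z => Cyc3 u z v) with hIdef
      have hIne : I.Nonempty := Finset.card_pos.1 (by omega)
      have hIU : I ⊆ U := Finset.filter_subset _ _
      have hmemI : ∀ z, z ∈ I ↔ z ∈ U ∧ 0 < relpos z u ∧ relpos z u < relpos v u := by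
        intro z
        rw [hIdef, Finset.mem_filter, cyc3_iff]
      have hunotI : u ∉ I := by
        intro h
        have := (hmemI u).1 h
        rw [relpos_self] at this
        omega
      have hvnotI : v ∉ I := by
        intro h
        have := (hmemI v).1 h
        omega
      set U' := U \ I with hU'def
      have hU'card : U'.card ≤ c := by
        have h1 : U'.card = U.card - I.card := Finset.card_sdiff_of_subset hIU
        have h2 : 0 < I.card := Finset.card_pos.2 hIne
        omega
      set F' := (fun T => T \ (↑I : Set (Fin m))) '' F with hF'def
      have hsub' : ∀ T' ∈ F', ∀ x ∈ T', x ∈ U' := by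
        rintro _ ⟨T, hT, rfl⟩ x ⟨hxT, hxI⟩
        exact Finset.mem_sdiff.2 ⟨hsub T hT x hxT, hxI⟩
      have hax' : ∀ T' ∈ F', ∀ T'' ∈ F', pairAxax T' T'' := by
        rintro _ ⟨T, hT, rfl⟩ _ ⟨T', hT', rfl⟩
        rintro ⟨a1, x1, a2, x2, h4, ha1, ha1n, ha2, ha2n, hx1, hx2⟩
        exact hax T hT T' hT' ⟨a1, x1, a2, x2, h4, ha1.1,
          fun hc => ha1n ⟨hc, ha1.2⟩, ha2.1, fun hc => ha2n ⟨hc, ha2.2⟩, hx1.1, hx2.1⟩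
      obtain ⟨Q', hQ'e, hQ'nc, hQ'succ, hQ'conn⟩ := ih U' F' hU'card hsub' hax'
      have hQ'eU : ∀ a b, Q'.Adj a b → a ∈ U ∧ b ∈ U := by
        intro a b hab
        obtain ⟨ha, hb⟩ := hQ'e a b hab
        exact ⟨(Finset.mem_sdiff.1 ha).1, (Finset.mem_sdiff.1 hb).1⟩
      refine ⟨Q' ⊔ QU U, ?_, nocross_QU_sup Q' U hQ'nc hQ'eU, ?_, ?_⟩
      · intro a b hab
        rcases hab with hab | hab
        · exact hQ'eU a b hab
        · rw [QU, SimpleGraph.fromRel_adj] at hab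
          exact ⟨hab.2.elim (fun h => h.1) (fun h => h.2.1), hab.2.elim (fun h => h.2.1) (fun h => h.1)⟩
      · intro p q h
        exact Or.inr (QU_adj h)
      · -- connectivity
        -- the "small gap must be empty" principle
        have small : ∀ T ∈ F, ∀ p q (w : Fin m), IsGap T p q → w ∈ I →
            (∀ z ∈ U, Cyc3 p z q → z ∈ I ∧ z ≠ w) → USucc U p q := by
          intro T hT p q w hgap hwI hsubz
          have hnone : ∀ z ∈ U, ¬ Cyc3 p z q := by
            by_contra hcon
            push_neg at hcon
            obtain ⟨z, hzU, hzc⟩ := hcon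
            have h1 := hmin T hT p q hgap z hzU hzc
            have h2 : (U.filter (fun z => Cyc3 p z q)) ⊆ I.erase w := by
              intro a ha
              rw [Finset.mem_filter] at ha
              obtain ⟨haI, haw⟩ := hsubz a ha.1 ha.2
              exact Finset.mem_erase.2 ⟨haw, haI⟩
            have h3 := Finset.card_le_card h2
            rw [Finset.card_erase_of_mem hwI] at h3
            omega
          exact ⟨hsub T hT p hgap.1, hsub T hT q hgap.2.1, hgap.2.2.1, hnone⟩
        -- chain connectivity inside I
        have chainT : ∀ T ∈ F, ∀ x y, x ∈ T → y ∈ T → x ∈ (↑I : Set (Fin m)) → y ∈ (↑I : Set (Fin m)) →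
            relpos x u ≤ relpos y u → ReachIn (QU U) (T ∩ ↑I) x y := by
          intro T hT x y hxT hyT hxI hyI hle
          refine walk_base (QU U) (T ∩ ↑I) u ?_ (relpos y u) x y ⟨hxT, hxI⟩ ⟨hyT, hyI⟩ hle (by omega)
          intro a w haS hwS hlt hnob
          have haI := (hmemI a).1 haS.2
          have hwI := (hmemI w).1 hwS.2
          have hane : a ≠ w := by
            intro h; subst h; omega
          have hgap : IsGap T a w := by
            refine ⟨haS.1, hwS.1, hane, ?_⟩
            intro z hzT hzc
            rw [cyc3_base u a z w hlt] at hzc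
            have hzU := hsub T hT z hzT
            have hzI : z ∈ (↑I : Set (Fin m)) := by
              rw [Finset.mem_coe, hmemI]
              exact ⟨hzU, by omega, by omega⟩
            exact hnob z ⟨hzT, hzI⟩ hzc
          have husucc : USucc U a w := by
            refine small T hT a w w hgap (by exact_mod_cast hwS.2) ?_
            intro z hzU hzc
            rw [cyc3_base u a z w hlt] at hzc
            constructor
            · rw [hmemI]; exact ⟨hzU, by omega, by omega⟩
            · intro h; subst h; omega
          exact QU_adj husucc
        -- exit from I
        have exitT : ∀ T ∈ F, (T ∩ (↑I : Set (Fin m))).Nonempty → (T \ (↑I : Set (Fin m))).Nonempty →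
            ∃ zz ∈ T \ (↑I : Set (Fin m)), ∀ x ∈ T ∩ (↑I : Set (Fin m)), ReachIn (QU U) T x zz := by
          intro T hT hTI hTout
          obtain ⟨xmin, hxminS, hxminmin⟩ :=
            Set.exists_min_image (T ∩ (↑I : Set (Fin m))) (fun z => relpos z u) (Set.toFinite _) hTI
          obtain ⟨xmax, hxmaxS, hxmaxmax⟩ :=
            Set.exists_max_image (T ∩ (↑I : Set (Fin m))) (fun z => relpos z u) (Set.toFinite _) hTI
          have hxminI := (hmemI xmin).1 hxminS.2
          have hxmaxI := (hmemI xmax).1 hxmaxS.2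
          have hreachmax : ∀ x ∈ T ∩ (↑I : Set (Fin m)), ReachIn (QU U) T x xmax := by
            intro x hx
            have h := chainT T hT x xmax hx.1 hxmaxS.1 hx.2 hxmaxS.2 (hxmaxmax x hx)
            exact reachIn_mono le_rfl Set.inter_subset_left h
          have hreachmin : ∀ x ∈ T ∩ (↑I : Set (Fin m)), ReachIn (QU U) T x xmin := by
            intro x hx
            have h := chainT T hT xmin x hxminS.1 hx.1 hxminS.2 hx.2 (hxminmin x hx)
            exact reachIn_symm (reachIn_mono le_rfl Set.inter_subset_left h)
          by_cases hu : u ∈ T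
          · have hne : u ≠ xmin := by
              intro h
              have h0 : relpos xmin u = 0 := by rw [← h, relpos_self]
              omega
            have hgap : IsGap T u xmin := by
              refine ⟨hu, hxminS.1, hne, ?_⟩
              intro z hzT hzc
              rw [cyc3_iff] at hzc
              have hzU := hsub T hT z hzT
              have hzS : z ∈ T ∩ (↑I : Set (Fin m)) :=
                ⟨hzT, by rw [Finset.mem_coe, hmemI]; exact ⟨hzU, by omega, by omega⟩⟩
              have := hxminmin z hzS
              omega
            have husucc : USucc U u xmin := by
              refine small T hT u xmin xmin hgap (Finset.mem_coe.1 hxminS.2) ?_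
              intro z hzU hzc
              rw [cyc3_iff] at hzc
              constructor
              · rw [hmemI]; exact ⟨hzU, by omega, by omega⟩
              · intro h; subst h; omega
            refine ⟨u, ⟨hu, fun hc => hunotI (Finset.mem_coe.1 hc)⟩, ?_⟩
            intro x hx
            exact reachIn_trans (hreachmin x hx)
              (reachIn_symm (reachIn_single (QU_adj husucc) hu hxminS.1))
          · by_cases hv : v ∈ T
            · have hne : xmax ≠ v := by
                intro h
                rw [h] at hxmaxI
                omega
              have hgap : IsGap T xmax v := by
                refine ⟨hxmaxS.1, hv, hne, ?_⟩
                intro z hzT hzc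
                rw [cyc3_base u xmax z v (by omega)] at hzc
                have hzU := hsub T hT z hzT
                have hzS : z ∈ T ∩ (↑I : Set (Fin m)) :=
                  ⟨hzT, by rw [Finset.mem_coe, hmemI]; exact ⟨hzU, by omega, by omega⟩⟩
                have := hxmaxmax z hzS
                omega
              have husucc : USucc U xmax v := by
                refine small T hT xmax v xmax hgap (Finset.mem_coe.1 hxmaxS.2) ?_
                intro z hzU hzc
                rw [cyc3_base u xmax z v (by omega)] at hzc
                constructor
                · rw [hmemI]; exact ⟨hzU, by omega, by omega⟩
                · intro h; subst h; omega
              refine ⟨v, ⟨hv, fun hc => hvnotI (Finset.mem_coe.1 hc)⟩, ?_⟩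
              intro x hx
              exact reachIn_trans (hreachmax x hx) (reachIn_single (QU_adj husucc) hxmaxS.1 hv)
            · exfalso
              obtain ⟨p, hpT, hpI⟩ := hTout
              have hpU := hsub T hT p hpT
              have hpne_u : p ≠ u := fun h => hu (h ▸ hpT)
              have hpne_v : p ≠ v := fun h => hv (h ▸ hpT)
              have hpd : relpos v u < relpos p u := by
                have h1 : relpos p u ≠ 0 := fun h0 => hpne_u ((relpos_eq_zero_iff p u).1 h0)
                have h2 : ¬(0 < relpos p u ∧ relpos p u < relpos v u) := by
                  intro hcon
                  exact hpI (by rw [Finset.mem_coe, hmemI]; exact ⟨hpU, hcon.1, hcon.2⟩)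
                have h3 : relpos p u ≠ relpos v u := fun h0 => hpne_v (relpos_right_cancel p v u h0)
                omega
              have hc4 : Cyc4 u xmin v p := by
                apply cyc4_of_base u
                rw [relpos_self]
                exact ⟨by omega, by omega, hpd⟩
              exact hax T0 hT0 T hT ⟨u, xmin, v, p, hc4, hgap0.1, hu, hgap0.2.1, hv, hxminS.1, hpT⟩
        intro T hT x hx y hy
        have hTF' : T \ (↑I : Set (Fin m)) ∈ F' := ⟨T, hT, rfl⟩
        have hQle : Q' ≤ Q' ⊔ QU U := le_sup_left
        have hQUle : QU U ≤ Q' ⊔ QU U := le_sup_right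
        by_cases hTout : (T \ (↑I : Set (Fin m))).Nonempty
        · by_cases hTI : (T ∩ (↑I : Set (Fin m))).Nonempty
          · obtain ⟨zz, hzz, hreach⟩ := exitT T hT hTI hTout
            have hto : ∀ w, w ∈ T → ReachIn (Q' ⊔ QU U) T w zz := by
              intro w hw
              by_cases hwI : w ∈ (↑I : Set (Fin m))
              · exact reachIn_mono hQUle (le_refl _) (hreach w ⟨hw, hwI⟩)
              · have h := hQ'conn (T \ (↑I : Set (Fin m))) hTF' w ⟨hw, hwI⟩ zz hzz
                exact reachIn_mono hQle Set.diff_subset h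
            exact reachIn_trans (hto x hx) (reachIn_symm (hto y hy))
          · have hxd : x ∈ T \ (↑I : Set (Fin m)) := ⟨hx, fun h => hTI ⟨x, hx, h⟩⟩
            have hyd : y ∈ T \ (↑I : Set (Fin m)) := ⟨hy, fun h => hTI ⟨y, hy, h⟩⟩
            exact reachIn_mono hQle Set.diff_subset (hQ'conn _ hTF' x hxd y hyd)
        · have hxI : x ∈ (↑I : Set (Fin m)) := by
            by_contra h; exact hTout ⟨x, hx, h⟩
          have hyI : y ∈ (↑I : Set (Fin m)) := by
            by_contra h; exact hTout ⟨y, hy, h⟩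
          rcases le_total (relpos x u) (relpos y u) with hle | hle
          · exact reachIn_mono hQUle Set.inter_subset_left (chainT T hT x y hx hy hxI hyI hle)
          · exact reachIn_symm
              (reachIn_mono hQUle Set.inter_subset_left (chainT T hT y x hy hx hyI hxI hle))
    · -- no nontrivial gaps: U-cycle suffices
      push_neg at hg
      refine ⟨QU U, ?_, nocross_QU U, ?_, ?_⟩
      · intro a b hab
        rw [QU, SimpleGraph.fromRel_adj] at hab
        exact ⟨hab.2.elim (fun h => h.1) (fun h => h.2.1), hab.2.elim (fun h => h.2.1) (fun h => h.1)⟩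
      · intro p q h; exact QU_adj h
      · intro T hT x hx y hy
        refine walk_base (QU U) T x ?_ (relpos y x) x y hx hy (by rw [relpos_self]; omega) (by omega)
        intro a w haT hwT hlt hnob
        have hane : a ≠ w := by
          intro h; subst h; omega
        have hgap : IsGap T a w := by
          refine ⟨haT, hwT, hane, ?_⟩
          intro z hzT hzc
          rw [cyc3_base x a z w hlt] at hzc
          exact hnob z hzT hzc
        have husucc : USucc U a w := by
          refine ⟨hsub T hT a haT, hsub T hT w hwT, hane, ?_⟩
          intro z hzU hzc
          exact hg T hT a w hgap z hzU hzc
        exact QU_adj husucc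

end SupportRec

set_option maxHeartbeats 1000000 in
lemma sepCore0 (n a2 a3 a4 l1 l2 l3 l4 pv pw pv2 pw2 : ℕ)
    (hl1 : l1 < n) (hl2 : l2 < n) (hl3 : l3 < n) (hl4 : l4 < n)
    (ha2 : a2 < n) (ha3 : a3 < n) (ha4 : a4 < n)
    (hpv : pv < n) (hpw : pw < n) (hpv2 : pv2 < n) (hpw2 : pw2 < n)
    (hs23 : a2 ≤ a3) (hs34 : a3 ≤ a4)
    (ht23 : a2 = a3 → l2 ≤ l3)
    (w12 : 0 < a2 → (n - a2) + l1 ≥ n ∨ (n - a2) + l1 ≥ l2)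
    (w14 : 0 < a4 → (n - a4) + l1 ≥ n ∨ (n - a4) + l1 ≥ l4)
    (w32 : a2 < a3 → (a3 - a2) + l3 ≥ n ∨ (a3 - a2) + l3 ≥ l2)
    (hv : pv ≤ l1)
    (hwQ2 : (a2 ≤ pw ∧ pw ≤ a2 + l2) ∨ pw + n ≤ a2 + l2)
    (hwnQ1 : ¬ (pw ≤ l1))
    (hwnQ3 : ¬ (a3 ≤ pw ∧ pw ≤ a3 + l3) ∧ ¬ (pw + n ≤ a3 + l3))
    (hv2Q3 : (a3 ≤ pv2 ∧ pv2 ≤ a3 + l3) ∨ pv2 + n ≤ a3 + l3)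
    (hw2Q4 : (a4 ≤ pw2 ∧ pw2 ≤ a4 + l4) ∨ pw2 + n ≤ a4 + l4)
    (hw2nQ1 : ¬ (pw2 ≤ l1))
    (hw2nQ3 : ¬ (a3 ≤ pw2 ∧ pw2 ≤ a3 + l3) ∧ ¬ (pw2 + n ≤ a3 + l3)) :
    pv < pw ∧ pw < pv2 ∧ pv2 < pw2 := by
  omega

set_option maxHeartbeats 1000000 in
lemma sepCore1 (n al be ga l1 l2 l3 l4 qv qw qv2 qw2 : ℕ)
    (hl1 : l1 < n) (hl2 : l2 < n) (hl3 : l3 < n) (hl4 : l4 < n)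
    (hal : al < n) (hbe : be < n) (hga : ga < n)
    (hqv : qv < n) (hqw : qw < n) (hqv2 : qv2 < n) (hqw2 : qw2 < n)
    (hab : al ≤ be)
    (hbg : (ga = 0 ∧ l1 ≤ l2) ∨ be < ga)
    (ht23 : al = 0 → l2 ≤ l3)
    (ht34 : al = be → l3 ≤ l4)
    (w21 : 0 < ga → (n - ga) + l2 ≥ n ∨ (n - ga) + l2 ≥ l1)
    (w23 : 0 < al → (n - al) + l2 ≥ n ∨ (n - al) + l2 ≥ l3)
    (w43 : al < be → (be - al) + l4 ≥ n ∨ (be - al) + l4 ≥ l3)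
    (hv : qv ≤ l2)
    (hwQ3 : (al ≤ qw ∧ qw ≤ al + l3) ∨ qw + n ≤ al + l3)
    (hwnQ2 : ¬ (qw ≤ l2))
    (hwnQ4 : ¬ (be ≤ qw ∧ qw ≤ be + l4) ∧ ¬ (qw + n ≤ be + l4))
    (hv2Q4 : (be ≤ qv2 ∧ qv2 ≤ be + l4) ∨ qv2 + n ≤ be + l4)
    (hw2Q1 : (ga ≤ qw2 ∧ qw2 ≤ ga + l1) ∨ qw2 + n ≤ ga + l1)
    (hw2nQ2 : ¬ (qw2 ≤ l2))
    (hw2nQ4 : ¬ (be ≤ qw2 ∧ qw2 ≤ be + l4) ∧ ¬ (qw2 + n ≤ be + l4)) :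
    qv < qw ∧ qw < qv2 ∧ qv2 < qw2 := by
  omega


section SepFin
variable {n : ℕ} [NeZero n]

/-- Separation, case: runs in lex-sorted order Q1 Q2 Q3 Q4, roles (R1..R4)=(Q1..Q4). -/
lemma sepFin0 (s1 t1 s2 t2 s3 t3 s4 t4 v w v2 w2 : Fin n)
    (h12 : lexLe (s1.val, relpos t1 s1) (s2.val, relpos t2 s2))
    (h23 : lexLe (s2.val, relpos t2 s2) (s3.val, relpos t3 s3))
    (h34 : lexLe (s3.val, relpos t3 s3) (s4.val, relpos t4 s4))
    (hscf12 : ¬ (0 < relpos s1 s2 ∧ relpos s1 s2 ≤ relpos t1 s2 ∧ relpos t1 s2 < relpos t2 s2))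
    (hscf14 : ¬ (0 < relpos s1 s4 ∧ relpos s1 s4 ≤ relpos t1 s4 ∧ relpos t1 s4 < relpos t4 s4))
    (hscf32 : ¬ (0 < relpos s3 s2 ∧ relpos s3 s2 ≤ relpos t3 s2 ∧ relpos t3 s2 < relpos t2 s2))
    (hv : relpos v s1 ≤ relpos t1 s1)
    (hw : relpos w s2 ≤ relpos t2 s2)
    (hwn1 : ¬ relpos w s1 ≤ relpos t1 s1)
    (hwn3 : ¬ relpos w s3 ≤ relpos t3 s3)
    (hv2 : relpos v2 s3 ≤ relpos t3 s3)
    (hw2 : relpos w2 s4 ≤ relpos t4 s4)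
    (hw2n1 : ¬ relpos w2 s1 ≤ relpos t1 s1)
    (hw2n3 : ¬ relpos w2 s3 ≤ relpos t3 s3) :
    Cyc4 v w v2 w2 := by
  have hl1 : relpos t1 s1 < n := relpos_lt _ _
  have hl2 : relpos t2 s2 < n := relpos_lt _ _
  have hl3 : relpos t3 s3 < n := relpos_lt _ _
  have hl4 : relpos t4 s4 < n := relpos_lt _ _
  have ha2 : relpos s2 s1 < n := relpos_lt _ _
  have ha3 : relpos s3 s1 < n := relpos_lt _ _
  have ha4 : relpos s4 s1 < n := relpos_lt _ _
  have hc2 := relpos_cases s2 s1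
  have hc3 := relpos_cases s3 s1
  have hc4 := relpos_cases s4 s1
  have hs12 : s1.val ≤ s2.val := by
    rcases h12 with h | h
    · exact le_of_lt h
    · exact le_of_eq h.1
  have hs23v : s2.val ≤ s3.val := by
    rcases h23 with h | h
    · exact le_of_lt h
    · exact le_of_eq h.1
  have hs34v : s3.val ≤ s4.val := by
    rcases h34 with h | h
    · exact le_of_lt h
    · exact le_of_eq h.1
  have hs23 : relpos s2 s1 ≤ relpos s3 s1 := by omega
  have hs34 : relpos s3 s1 ≤ relpos s4 s1 := by omega
  have ht23 : relpos s2 s1 = relpos s3 s1 → relpos t2 s2 ≤ relpos t3 s3 := by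
    intro h
    rcases h23 with hh | hh
    · have : (s2.val : ℕ) < s3.val := hh
      omega
    · exact hh.2
  have w12 : 0 < relpos s2 s1 → (n - relpos s2 s1) + relpos t1 s1 ≥ n ∨ (n - relpos s2 s1) + relpos t1 s1 ≥ relpos t2 s2 := by
    intro hpos
    have hne : s2 ≠ s1 := by
      intro h
      have h0 := (relpos_eq_zero_iff s2 s1).2 h
      omega
    have hanti := relpos_antisymm s2 s1 hne
    have := scfFact s1 t1 s2 t2 hscf12 (by omega)
    omega
  have w14 : 0 < relpos s4 s1 → (n - relpos s4 s1) + relpos t1 s1 ≥ n ∨ (n - relpos s4 s1) + relpos t1 s1 ≥ relpos t4 s4 := by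
    intro hpos
    have hne : s4 ≠ s1 := by
      intro h
      have h0 := (relpos_eq_zero_iff s4 s1).2 h
      omega
    have hanti := relpos_antisymm s4 s1 hne
    have := scfFact s1 t1 s4 t4 hscf14 (by omega)
    omega
  have w32 : relpos s2 s1 < relpos s3 s1 → (relpos s3 s1 - relpos s2 s1) + relpos t3 s3 ≥ n ∨ (relpos s3 s1 - relpos s2 s1) + relpos t3 s3 ≥ relpos t2 s2 := by
    intro hlt
    have hch := relpos_chain s3 s2 s1
    have hlt32 := relpos_lt s3 s2
    have h32 : relpos s3 s2 = relpos s3 s1 - relpos s2 s1 := by omega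
    have := scfFact s3 t3 s2 t2 hscf32 (by omega)
    omega
  have mw2 := (shift_le_iff w s2 s1 (relpos t2 s2) hl2).1 hw
  have mwn3 := fun hq => hwn3 ((shift_le_iff w s3 s1 (relpos t3 s3) hl3).2 hq)
  have mv2 := (shift_le_iff v2 s3 s1 (relpos t3 s3) hl3).1 hv2
  have mw2Q4 := (shift_le_iff w2 s4 s1 (relpos t4 s4) hl4).1 hw2
  have mw2n3 := fun hq => hw2n3 ((shift_le_iff w2 s3 s1 (relpos t3 s3) hl3).2 hq)
  have hpv := relpos_lt v s1
  have hpw := relpos_lt w s1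
  have hpv2 := relpos_lt v2 s1
  have hpw2 := relpos_lt w2 s1
  have key := sepCore0 n (relpos s2 s1) (relpos s3 s1) (relpos s4 s1)
    (relpos t1 s1) (relpos t2 s2) (relpos t3 s3) (relpos t4 s4)
    (relpos v s1) (relpos w s1) (relpos v2 s1) (relpos w2 s1)
    hl1 hl2 hl3 hl4 ha2 ha3 ha4 hpv hpw hpv2 hpw2 hs23 hs34 ht23 w12 w14 w32
    hv mw2 hwn1 ⟨fun hq => mwn3 (Or.inl hq), fun hq => mwn3 (Or.inr hq)⟩
    mv2 mw2Q4 hw2n1 ⟨fun hq => mw2n3 (Or.inl hq), fun hq => mw2n3 (Or.inr hq)⟩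
  exact cyc4_of_base s1 v w v2 w2 key

/-- Separation, case: runs in lex order Q1 Q2 Q3 Q4, roles (R1,R2,R3,R4)=(Q2,Q3,Q4,Q1). -/
lemma sepFin1 (s1 t1 s2 t2 s3 t3 s4 t4 v w v2 w2 : Fin n)
    (h12 : lexLe (s1.val, relpos t1 s1) (s2.val, relpos t2 s2))
    (h23 : lexLe (s2.val, relpos t2 s2) (s3.val, relpos t3 s3))
    (h34 : lexLe (s3.val, relpos t3 s3) (s4.val, relpos t4 s4))
    (hscf21 : ¬ (0 < relpos s2 s1 ∧ relpos s2 s1 ≤ relpos t2 s1 ∧ relpos t2 s1 < relpos t1 s1))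
    (hscf23 : ¬ (0 < relpos s2 s3 ∧ relpos s2 s3 ≤ relpos t2 s3 ∧ relpos t2 s3 < relpos t3 s3))
    (hscf43 : ¬ (0 < relpos s4 s3 ∧ relpos s4 s3 ≤ relpos t4 s3 ∧ relpos t4 s3 < relpos t3 s3))
    (hv : relpos v s2 ≤ relpos t2 s2)
    (hw : relpos w s3 ≤ relpos t3 s3)
    (hwn2 : ¬ relpos w s2 ≤ relpos t2 s2)
    (hwn4 : ¬ relpos w s4 ≤ relpos t4 s4)
    (hv2 : relpos v2 s4 ≤ relpos t4 s4)
    (hw2 : relpos w2 s1 ≤ relpos t1 s1)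
    (hw2n2 : ¬ relpos w2 s2 ≤ relpos t2 s2)
    (hw2n4 : ¬ relpos w2 s4 ≤ relpos t4 s4) :
    Cyc4 v w v2 w2 := by
  have hl1 : relpos t1 s1 < n := relpos_lt _ _
  have hl2 : relpos t2 s2 < n := relpos_lt _ _
  have hl3 : relpos t3 s3 < n := relpos_lt _ _
  have hl4 : relpos t4 s4 < n := relpos_lt _ _
  have hal : relpos s3 s2 < n := relpos_lt _ _
  have hbe : relpos s4 s2 < n := relpos_lt _ _
  have hga : relpos s1 s2 < n := relpos_lt _ _
  have hc3 := relpos_cases s3 s2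
  have hc4 := relpos_cases s4 s2
  have hc1 := relpos_cases s1 s2
  have hs12 : s1.val ≤ s2.val := by
    rcases h12 with h | h
    · exact le_of_lt h
    · exact le_of_eq h.1
  have hs23v : s2.val ≤ s3.val := by
    rcases h23 with h | h
    · exact le_of_lt h
    · exact le_of_eq h.1
  have hs34v : s3.val ≤ s4.val := by
    rcases h34 with h | h
    · exact le_of_lt h
    · exact le_of_eq h.1
  have hab : relpos s3 s2 ≤ relpos s4 s2 := by omega
  have hbg : (relpos s1 s2 = 0 ∧ relpos t1 s1 ≤ relpos t2 s2) ∨ relpos s4 s2 < relpos s1 s2 := by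
    rcases Nat.lt_or_ge s1.val s2.val with h | h
    · right
      have h4 := s4.isLt
      omega
    · have hv12 : s1.val = s2.val := by omega
      left
      constructor
      · omega
      · rcases h12 with hh | hh
        · exact absurd hh (by omega)
        · exact hh.2
  have ht23 : relpos s3 s2 = 0 → relpos t2 s2 ≤ relpos t3 s3 := by
    intro h
    rcases h23 with hh | hh
    · have : (s2.val : ℕ) < s3.val := hh
      omega
    · exact hh.2
  have ht34 : relpos s3 s2 = relpos s4 s2 → relpos t3 s3 ≤ relpos t4 s4 := by
    intro h
    rcases h34 with hh | hh
    · have : (s3.val : ℕ) < s4.val := hh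
      omega
    · exact hh.2
  have w21 : 0 < relpos s1 s2 → (n - relpos s1 s2) + relpos t2 s2 ≥ n ∨ (n - relpos s1 s2) + relpos t2 s2 ≥ relpos t1 s1 := by
    intro hpos
    have hne : s1 ≠ s2 := by
      intro h
      have h0 := (relpos_eq_zero_iff s1 s2).2 h
      omega
    have hanti := relpos_antisymm s1 s2 hne
    have := scfFact s2 t2 s1 t1 hscf21 (by omega)
    omega
  have w23 : 0 < relpos s3 s2 → (n - relpos s3 s2) + relpos t2 s2 ≥ n ∨ (n - relpos s3 s2) + relpos t2 s2 ≥ relpos t3 s3 := by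
    intro hpos
    have hne : s3 ≠ s2 := by
      intro h
      have h0 := (relpos_eq_zero_iff s3 s2).2 h
      omega
    have hanti := relpos_antisymm s3 s2 hne
    have := scfFact s2 t2 s3 t3 hscf23 (by omega)
    omega
  have w43 : relpos s3 s2 < relpos s4 s2 → (relpos s4 s2 - relpos s3 s2) + relpos t4 s4 ≥ n ∨ (relpos s4 s2 - relpos s3 s2) + relpos t4 s4 ≥ relpos t3 s3 := by
    intro hlt
    have hch := relpos_chain s4 s3 s2
    have hlt43 := relpos_lt s4 s3
    have h43 : relpos s4 s3 = relpos s4 s2 - relpos s3 s2 := by omega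
    have := scfFact s4 t4 s3 t3 hscf43 (by omega)
    omega
  have mw := (shift_le_iff w s3 s2 (relpos t3 s3) hl3).1 hw
  have mwn4 := fun hq => hwn4 ((shift_le_iff w s4 s2 (relpos t4 s4) hl4).2 hq)
  have mv2 := (shift_le_iff v2 s4 s2 (relpos t4 s4) hl4).1 hv2
  have mw2 := (shift_le_iff w2 s1 s2 (relpos t1 s1) hl1).1 hw2
  have mw2n4 := fun hq => hw2n4 ((shift_le_iff w2 s4 s2 (relpos t4 s4) hl4).2 hq)
  have hqv := relpos_lt v s2
  have hqw := relpos_lt w s2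
  have hqv2 := relpos_lt v2 s2
  have hqw2 := relpos_lt w2 s2
  have key := sepCore1 n (relpos s3 s2) (relpos s4 s2) (relpos s1 s2)
    (relpos t1 s1) (relpos t2 s2) (relpos t3 s3) (relpos t4 s4)
    (relpos v s2) (relpos w s2) (relpos v2 s2) (relpos w2 s2)
    hl1 hl2 hl3 hl4 hal hbe hga hqv hqw hqv2 hqw2 hab hbg ht23 ht34 w21 w23 w43
    hv mw hwn2 ⟨fun hq => mwn4 (Or.inl hq), fun hq => mwn4 (Or.inr hq)⟩
    mv2 mw2 hw2n2 ⟨fun hq => mw2n4 (Or.inl hq), fun hq => mw2n4 (Or.inr hq)⟩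
  exact cyc4_of_base s2 v w v2 w2 key

end SepFin


section Extra
variable {n : ℕ} [NeZero n]

lemma mem_arcC_iff (x u v : Fin n) : x ∈ arcC u v ↔ relpos x u ≤ relpos v u := by
  have h1 := relpos_cases x u
  have h2 := relpos_cases v u
  simp only [arcC, Set.mem_union, Set.mem_singleton_iff, Set.mem_setOf_eq, cyc3_iff]
  constructor
  · rintro ((rfl | rfl) | h)
    · rw [relpos_self]; omega
    · omega
    · omega
  · intro h
    by_cases hxu : x = u
    · exact Or.inl (Or.inl hxu)
    · by_cases hxv : x = v
      · exact Or.inl (Or.inr hxv)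
      · right
        have hnz : relpos x u ≠ 0 := fun h0 => hxu ((relpos_eq_zero_iff x u).1 h0)
        have hne : relpos x u ≠ relpos v u := fun h0 => hxv (relpos_right_cancel x v u h0)
        omega

lemma relpos_succ (k : Fin n) (h : k ≠ k + 1) : relpos (k + 1) k = 1 := by
  have hm : 2 ≤ n := by
    by_contra hc
    have hpos := npos (n := n)
    interval_cases n
    · exact h (Subsingleton.elim _ _)
  have hval : (k + 1).val = (k.val + 1) % n := by
    rw [Fin.add_def]
    simp [Fin.val_one']
  unfold relpos
  rw [hval]
  rcases Nat.lt_or_ge (k.val + 1) n with hlt | hge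
  · rw [Nat.mod_eq_of_lt hlt]
    rw [show k.val + 1 + n - k.val = n + 1 by omega]
    rw [Nat.add_mod_left n 1, Nat.mod_eq_of_lt (by omega)]
  · have hk : k.val + 1 = n := by have := k.isLt; omega
    rw [hk, Nat.mod_self]
    rw [show 0 + n - k.val = 1 by omega]
    exact Nat.mod_eq_of_lt (by omega)

lemma usucc_univ_succ (k : Fin n) (h : k ≠ k + 1) : USucc Finset.univ k (k + 1) := by
  refine ⟨Finset.mem_univ _, Finset.mem_univ _, h, ?_⟩
  intro z _ hz
  rw [cyc3_iff, relpos_succ k h] at hz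
  omega

lemma reachIn_induce_connected (Q : SimpleGraph (Fin n)) (S : Set (Fin n))
    (hne : S.Nonempty) (h : ∀ x ∈ S, ∀ y ∈ S, ReachIn Q S x y) : (Q.induce S).Connected := by
  rw [SimpleGraph.connected_iff]
  constructor
  · rintro ⟨x, hx⟩ ⟨y, hy⟩
    have key : ∀ (a b : Fin n), ReachIn Q S a b → ∀ (ha : a ∈ S) (hb : b ∈ S),
        (Q.induce S).Reachable ⟨a, ha⟩ ⟨b, hb⟩ := by
      intro a b hab
      induction hab with
      | refl =>
        intro ha hb
        exact SimpleGraph.Reachable.refl _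
      | tail hr hstep ih =>
        intro ha hb
        obtain ⟨hadj, hbS', hcS⟩ := hstep
        refine SimpleGraph.Reachable.trans (ih ha hbS') ?_
        exact SimpleGraph.Adj.reachable (by simp only [SimpleGraph.comap_adj]; exact hadj)
    exact key x y (h x hx y hy) hx hy
  · obtain ⟨x, hx⟩ := hne
    exact ⟨⟨x, hx⟩⟩

end Extra

theorem stmt14 (n m : ℕ) [NeZero n] [NeZero m] (e : Fin m → Set (Fin n))
    (he : Function.Injective e)
    (s t : Fin m → Fin n) (hrun : ∀ k, e k = arcC (s k) (t k))
    (hsort : ∀ k l : Fin m, k < l →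
      lexLe ((s k).val, relpos (t k) (s k)) ((s l).val, relpos (t l) (s l)))
    (hscf : ∀ k l : Fin m, ¬ (0 < relpos (s k) (s l) ∧
      relpos (s k) (s l) ≤ relpos (t k) (s l) ∧
      relpos (t k) (s l) < relpos (t l) (s l)))
    (𝓚 : Set (Set (Fin n)))
    (haxH : AxaxFree (Set.range e)) (haxK : AxaxFree 𝓚) :
    ∃ Q : SimpleGraph (Fin m),
      (∀ k : Fin m, k ≠ k + 1 → Q.Adj k (k + 1)) ∧
      (∀ a b c d : Fin m, Q.Adj a b → Q.Adj c d → ¬ Cyc4 a c b d) ∧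
      ∀ K ∈ 𝓚, {k : Fin m | (e k ∩ K).Nonempty}.Nonempty →
        (Q.induce {k : Fin m | (e k ∩ K).Nonempty}).Connected := by
  classical
  have memrun : ∀ (k : Fin m) (x : Fin n), x ∈ e k ↔ relpos x (s k) ≤ relpos (t k) (s k) := by
    intro k x
    rw [hrun k]
    exact mem_arcC_iff x (s k) (t k)
  have traceAxax : ∀ K, K ∈ 𝓚 → ∀ K', K' ∈ 𝓚 →
      pairAxax {k : Fin m | (e k ∩ K).Nonempty} {k : Fin m | (e k ∩ K').Nonempty} := by
    intro K hK K' hK'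
    rintro ⟨i1, i2, i3, i4, h4, h1, h1n, h3, h3n, h2, h2'⟩
    obtain ⟨v, hv1, hvK⟩ := h1
    obtain ⟨v2, hv31, hv2K⟩ := h3
    obtain ⟨w, hw1, hwK'⟩ := h2
    obtain ⟨w2, hw21, hw2K'⟩ := h2'
    have hvn : v ∉ K' := fun hc => h1n ⟨v, hv1, hc⟩
    have hv2n : v2 ∉ K' := fun hc => h3n ⟨v2, hv31, hc⟩
    rw [memrun] at hv1 hv31 hw1 hw21
    have hwn1' : ¬ relpos w (s i1) ≤ relpos (t i1) (s i1) :=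
      fun hc => h1n ⟨w, (memrun i1 w).2 hc, hwK'⟩
    have hwn3' : ¬ relpos w (s i3) ≤ relpos (t i3) (s i3) :=
      fun hc => h3n ⟨w, (memrun i3 w).2 hc, hwK'⟩
    have hw2n1' : ¬ relpos w2 (s i1) ≤ relpos (t i1) (s i1) :=
      fun hc => h1n ⟨w2, (memrun i1 w2).2 hc, hw2K'⟩
    have hw2n3' : ¬ relpos w2 (s i3) ≤ relpos (t i3) (s i3) :=
      fun hc => h3n ⟨w2, (memrun i3 w2).2 hc, hw2K'⟩
    have hC4 : Cyc4 v w v2 w2 := by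
      rcases h4 with ⟨ha, hb, hc⟩ | ⟨ha, hb, hc⟩ | ⟨ha, hb, hc⟩ | ⟨ha, hb, hc⟩
      · exact sepFin0 (s i1) (t i1) (s i2) (t i2) (s i3) (t i3) (s i4) (t i4) v w v2 w2
          (hsort i1 i2 ha) (hsort i2 i3 hb) (hsort i3 i4 hc)
          (hscf i1 i2) (hscf i1 i4) (hscf i3 i2)
          hv1 hw1 hwn1' hwn3' hv31 hw21 hw2n1' hw2n3'
      · have h := sepFin1 (s i2) (t i2) (s i3) (t i3) (s i4) (t i4) (s i1) (t i1) v2 w2 v w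
          (hsort i2 i3 ha) (hsort i3 i4 hb) (hsort i4 i1 hc)
          (hscf i3 i2) (hscf i3 i4) (hscf i1 i4)
          hv31 hw21 hw2n3' hw2n1' hv1 hw1 hwn3' hwn1'
        exact cyc4_rot _ _ _ _ (cyc4_rot _ _ _ _ h)
      · have h := sepFin0 (s i3) (t i3) (s i4) (t i4) (s i1) (t i1) (s i2) (t i2) v2 w2 v w
          (hsort i3 i4 ha) (hsort i4 i1 hb) (hsort i1 i2 hc)
          (hscf i3 i4) (hscf i3 i2) (hscf i1 i4)
          hv31 hw21 hw2n3' hw2n1' hv1 hw1 hwn3' hwn1'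
        exact cyc4_rot _ _ _ _ (cyc4_rot _ _ _ _ h)
      · exact sepFin1 (s i4) (t i4) (s i1) (t i1) (s i2) (t i2) (s i3) (t i3) v w v2 w2
          (hsort i4 i1 ha) (hsort i1 i2 hb) (hsort i2 i3 hc)
          (hscf i1 i4) (hscf i1 i2) (hscf i3 i2)
          hv1 hw1 hwn1' hwn3' hv31 hw21 hw2n1' hw2n3'
    exact haxK ⟨K, hK, K', hK', v, w, v2, w2, hC4, ⟨hvK, hvn⟩, ⟨hv2K, hv2n⟩, hwK', hw2K'⟩
  set F : Set (Set (Fin m)) := (fun K => {k : Fin m | (e k ∩ K).Nonempty}) '' 𝓚 with hF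
  have hax : ∀ T ∈ F, ∀ T' ∈ F, pairAxax T T' := by
    rintro _ ⟨K, hK, rfl⟩ _ ⟨K', hK', rfl⟩
    exact traceAxax K hK K' hK'
  obtain ⟨Q, hQe, hQnc, hQsucc, hQconn⟩ :=
    supportRec (Finset.univ : Finset (Fin m)).card (Finset.univ : Finset (Fin m)) F
      (le_refl _) (fun T _ x _ => Finset.mem_univ x) hax
  refine ⟨Q, ?_, ?_, ?_⟩
  · intro k hk
    exact hQsucc k (k + 1) (usucc_univ_succ k hk)
  · exact hQnc
  · intro K hK hne
    exact reachIn_induce_connected Q _ hne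
      (fun x hx y hy => hQconn _ ⟨K, hK, rfl⟩ x hx y hy)
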